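/- Let (X, d) be a metric space such that for every nonempty compact set K ⊆ X and every ε > 0 there exists a function φ : X → ℝ which is Lipschitz with Lipschitz constant at most ε, has compact support, and satisfies φ(x) ≥ 1 for every x ∈ K. Then X is a complete metric space. Equivalently: if X is ∞-parabolic, then X is complete. -/
import Mathlib


/-- If a metric space is `∞`-parabolic — for every nonempty compact `K` and every `ε > 0`
there is an `ε`-Lipschitz function with compact support that is `≥ 1` on `K` — then it is a
complete metric space. -/
theorem infty_parabolic_implies_complete {X : Type*} [MetricSpace X]
    (h : ∀ K : Set X, IsCompact K → K.Nonempty → ∀ ε : ℝ, 0 < ε →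
      ∃ φ : X → ℝ, (∀ x y : X, dist (φ x) (φ y) ≤ ε * dist x y) ∧
        HasCompactSupport φ ∧ ∀ x ∈ K, 1 ≤ φ x) :
    CompleteSpace X := by
  apply Metric.complete_of_cauchySeq_tendsto
  intro u hu
  obtain ⟨R, hR, hRd⟩ := cauchySeq_bdd hu
  obtain ⟨φ, hLip, hsupp, hone⟩ := h {u 0} isCompact_singleton ⟨u 0, rfl⟩ (1 / R)
    (by positivity)
  have hmem : ∀ n, u n ∈ tsupport φ := by
    intro n
    apply subset_closure
    have h1 : dist (φ (u n)) (φ (u 0)) ≤ (1 / R) * dist (u n) (u 0) := hLip _ _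
    have h2 : (1 / R) * dist (u n) (u 0) < (1 / R) * R := by
      apply mul_lt_mul_of_pos_left (hRd n 0) (by positivity)
    have h3 : (1 / R) * R = 1 := by field_simp
    have h4 : φ (u 0) - φ (u n) ≤ dist (φ (u n)) (φ (u 0)) := by
      rw [Real.dist_eq, abs_sub_comm]; exact le_abs_self _
    have h5 : (0 : ℝ) < φ (u n) := by
      have := hone (u 0) rfl; linarith
    exact fun hc => by rw [hc] at h5; exact lt_irrefl _ h5
  have hcomp : IsCompact (tsupport φ) := hsupp
  have hcomplete : IsComplete (tsupport φ) := hcomp.isComplete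
  obtain ⟨x, _, hx⟩ := hcomplete (Filter.map u Filter.atTop) hu
    (Filter.le_principal_iff.2 (Filter.mem_map.mpr (Filter.univ_mem' hmem)))
  exact ⟨x, hx⟩
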